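/- Let K be a field, f ∈ K[z] a polynomial of degree at least 2, and l, n coprime positive integers. For a polynomial g ∈ K[z] of degree at least 2 and a positive integer N, define the N-th dynatomic rational function Φ*_{g,N} := Π_{e | N} (g^{∘e}(z) − z)^{μ(N/e)}, an element of the rational function field K(z) (each factor g^{∘e}(z) − z is a nonzero polynomial since deg g ≥ 2). Then Π_{e | l} Φ*_{f, e·n} = Φ*_{f^{∘l}, n} in K(z). -/

import Mathlib

open Polynomial Finset
open scoped Pointwise

/-- The resultant of two polynomials `f` and `g`, defined as the determinant of their
Sylvester matrix (rows of coefficients of `f` repeated `g.natDegree` times, followed by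
rows of coefficients of `g` repeated `f.natDegree` times). -/
noncomputable def resultant {R : Type*} [CommRing R] (f g : Polynomial R) : R :=
  Matrix.det (Matrix.of fun i j : Fin (g.natDegree + f.natDegree) =>
    if (i : ℕ) < g.natDegree then
      (if (i : ℕ) ≤ (j : ℕ) ∧ (j : ℕ) ≤ (i : ℕ) + f.natDegree then
        f.coeff (f.natDegree + (i : ℕ) - (j : ℕ)) else 0)
    else
      (if (i : ℕ) - g.natDegree ≤ (j : ℕ) ∧ (j : ℕ) ≤ ((i : ℕ) - g.natDegree) + g.natDegree then
        g.coeff (g.natDegree + ((i : ℕ) - g.natDegree) - (j : ℕ)) else 0))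

/-- The `n`-fold compositional iterate of a polynomial: `polyIter f 0 = X`,
`polyIter f (n+1) = (polyIter f n).comp f`. -/
noncomputable def polyIter {R : Type*} [CommSemiring R] (f : Polynomial R) : ℕ → Polynomial R
  | 0 => X
  | n + 1 => (polyIter f n).comp f

/-- The `N`-th dynatomic rational function of a polynomial `g`:
`Φ*_{g,N} = ∏_{e ∣ N} (g^{∘e}(z) − z)^{μ(N/e)}`, an element of the rational function
field `K(z)`. -/
noncomputable def dynatomicR {K : Type*} [Field K] (g : Polynomial K) (N : ℕ) : RatFunc K :=
  ∏ e ∈ N.divisors,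
    (algebraMap (Polynomial K) (RatFunc K) (polyIter g e - Polynomial.X)) ^
      (ArithmeticFunction.moebius (N / e) : ℤ)

lemma polyIter_comp {R : Type*} [CommSemiring R] (f : Polynomial R) (a b : ℕ) :
    (polyIter f a).comp (polyIter f b) = polyIter f (a + b) := by
  induction b with
  | zero => simp [polyIter]
  | succ b ih =>
    show (polyIter f a).comp ((polyIter f b).comp f) = _
    rw [← Polynomial.comp_assoc, ih]
    rfl

lemma polyIter_polyIter {R : Type*} [CommSemiring R] (f : Polynomial R) (l e : ℕ) :
    polyIter (polyIter f l) e = polyIter f (l * e) := by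
  induction e with
  | zero => simp [polyIter]
  | succ e ih =>
    show (polyIter (polyIter f l) e).comp (polyIter f l) = _
    rw [ih, polyIter_comp, Nat.mul_succ]

lemma natDegree_polyIter {K : Type*} [Field K] (f : Polynomial K) (d : ℕ) :
    (polyIter f d).natDegree = f.natDegree ^ d := by
  induction d with
  | zero => simp [polyIter]
  | succ d ih =>
    show ((polyIter f d).comp f).natDegree = _
    rw [Polynomial.natDegree_comp, ih, pow_succ]

lemma polyIter_sub_X_ne_zero {K : Type*} [Field K] {f : Polynomial K}
    (hf : 2 ≤ f.natDegree) {d : ℕ} (hd : 0 < d) : polyIter f d - X ≠ 0 := by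
  rw [sub_ne_zero]
  intro h
  have h1 : (polyIter f d).natDegree = 1 := by rw [h, natDegree_X]
  rw [natDegree_polyIter] at h1
  have h2 : 2 ^ d ≤ f.natDegree ^ d := Nat.pow_le_pow_left hf d
  have h3 : 1 < 2 ^ d := Nat.one_lt_two_pow_iff.mpr hd.ne'
  omega

lemma prod_divisors_mul_coprime {M : Type*} [CommMonoid M] {a b : ℕ} (h : Nat.Coprime a b)
    (F : ℕ → M) : ∏ c ∈ (a * b).divisors, F c = ∏ d ∈ a.divisors, ∏ e ∈ b.divisors, F (d * e) := by
  rw [Nat.divisors_mul, ← Finset.prod_product']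
  rw [show a.divisors * b.divisors = (a.divisors ×ˢ b.divisors).image (fun p => p.1 * p.2) by
    rw [Finset.mul_def]]
  rw [Finset.prod_image]
  rintro ⟨d1, e1⟩ h1 ⟨d2, e2⟩ h2 heq
  simp only [Finset.mem_coe, Finset.mem_product, Nat.mem_divisors] at h1 h2
  dsimp at heq
  have c12 : Nat.Coprime d1 e2 :=
    Nat.Coprime.coprime_dvd_right h2.2.1 (Nat.Coprime.coprime_dvd_left h1.1.1 h)
  have c21 : Nat.Coprime d2 e1 :=
    Nat.Coprime.coprime_dvd_right h1.2.1 (Nat.Coprime.coprime_dvd_left h2.1.1 h)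
  have hd : d1 = d2 := by
    refine Nat.dvd_antisymm ?_ ?_
    · exact (Nat.Coprime.dvd_of_dvd_mul_right c12) ⟨e1, heq.symm⟩
    · exact (Nat.Coprime.dvd_of_dvd_mul_right c21) ⟨e2, heq⟩
  subst hd
  have hd1 : d1 ≠ 0 := fun h0 => h1.1.2 (by simpa [h0] using h1.1.1)
  have : e1 = e2 := Nat.eq_of_mul_eq_mul_left (Nat.pos_of_ne_zero hd1) heq
  simp [this]

theorem dynatomic_iterate_identity {K : Type*} [Field K] (f : Polynomial K)
    (hf : 2 ≤ f.natDegree) (l n : ℕ) (hl : 0 < l) (hn : 0 < n) (hln : Nat.Coprime l n) :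
    ∏ e ∈ l.divisors, dynatomicR f (e * n) = dynatomicR (polyIter f l) n := by
  classical
  set P : ℕ → RatFunc K := fun d => algebraMap (Polynomial K) (RatFunc K) (polyIter f d - X)
    with hPdef
  have hPne : ∀ d > 0, P d ≠ 0 := fun d hd =>
    RatFunc.algebraMap_ne_zero (polyIter_sub_X_ne_zero hf hd)
  have hdyn : ∀ m : ℕ, dynatomicR f m =
      ∏ x ∈ m.divisorsAntidiagonal, P x.2 ^ (ArithmeticFunction.moebius x.1 : ℤ) := by
    intro m
    rw [Nat.prod_divisorsAntidiagonal'
      (f := fun a b => P b ^ (ArithmeticFunction.moebius a : ℤ))]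
    rfl
  have hdynne : ∀ m > 0, dynatomicR f m ≠ 0 := by
    intro m hm
    unfold dynatomicR
    rw [Finset.prod_ne_zero_iff]
    intro e he
    exact zpow_ne_zero _
      (RatFunc.algebraMap_ne_zero (polyIter_sub_X_ne_zero hf (Nat.pos_of_mem_divisors he)))
  have hinv : ∀ m > 0, ∏ c ∈ m.divisors, dynatomicR f c = P m := by
    refine (ArithmeticFunction.prod_eq_iff_prod_pow_moebius_eq_of_nonzero hdynne hPne).mpr ?_
    intro m _
    exact (hdyn m).symm
  have hR : dynatomicR (polyIter f l) n =
      ∏ e ∈ n.divisors, P (l * e) ^ (ArithmeticFunction.moebius (n / e) : ℤ) := by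
    unfold dynatomicR
    refine Finset.prod_congr rfl fun e he => ?_
    rw [polyIter_polyIter]
  rw [hR]
  have hf' : ∀ m > 0, (∏ e ∈ l.divisors, dynatomicR f (e * m)) ≠ 0 := by
    intro m hm
    rw [Finset.prod_ne_zero_iff]
    intro e he
    exact hdynne _ (Nat.mul_pos (Nat.pos_of_mem_divisors he) hm)
  have hg' : ∀ m > 0, P (l * m) ≠ 0 := fun m hm => hPne _ (Nat.mul_pos hl hm)
  have hmain : ∀ m > 0, m ∈ {m : ℕ | m ∣ n} →
      ∏ i ∈ m.divisors, ∏ e ∈ l.divisors, dynatomicR f (e * i) = P (l * m) := by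
    intro m hm hmdvd
    have hcop : Nat.Coprime l m := Nat.Coprime.coprime_dvd_right hmdvd hln
    rw [Finset.prod_comm, ← prod_divisors_mul_coprime hcop (dynatomicR f)]
    exact hinv (l * m) (Nat.mul_pos hl hm)
  have key := (ArithmeticFunction.prod_eq_iff_prod_pow_moebius_eq_on_of_nonzero
      {m : ℕ | m ∣ n} (fun m m' hmm' hm' => dvd_trans hmm' hm') hf' hg').mp hmain n hn
      (dvd_refl n)
  rw [← key, Nat.prod_divisorsAntidiagonal'
    (f := fun a b => P (l * b) ^ (ArithmeticFunction.moebius a : ℤ))]
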